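/- arXiv:math/0611263 — 3 statements merged into one kernel-verified Lean document; each statement's English description precedes it below -/
import Mathlib

section
/- Let Σ₀ be a positive definite p×p real matrix, let σ_1,…,σ_K be positive scalars, and set Σ_k = σ_k²·Σ₀ for k = 1,…,K. Let μ_1,…,μ_K ∈ ℝ^p and suppose there exists d ∈ ℝ^p such that μ_i − μ_j lies in the span of d for all i, j. Then there exist an invertible p×p matrix A, a vector b ∈ ℝ^p, and scalars δ_1,…,δ_K such that A Σ_k Aᵀ = σ_k²·I and A μ_k + b = δ_k·U for every k, where U is the all-ones vector in ℝ^p. -/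
open Matrix
open scoped MatrixOrder

private lemma dot_self_nonneg {p : ℕ} (w : Fin p → ℝ) : 0 ≤ w ⬝ᵥ w :=
  Finset.sum_nonneg fun i _ => mul_self_nonneg (w i)

private lemma dot_self_pos {p : ℕ} {w : Fin p → ℝ} (hw : w ≠ 0) : 0 < w ⬝ᵥ w := by
  rcases (dot_self_nonneg w).lt_or_eq with h | h
  · exact h
  · exfalso
    apply hw
    funext i
    have h0 : ∀ i ∈ Finset.univ, (0:ℝ) ≤ w i * w i := fun i _ => mul_self_nonneg _
    have := (Finset.sum_eq_zero_iff_of_nonneg h0).mp h.symm i (Finset.mem_univ i)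
    exact mul_self_eq_zero.mp this

private lemma vecMulVec_mulVec' {p : ℕ} (w x : Fin p → ℝ) :
    (vecMulVec w w).mulVec x = (w ⬝ᵥ x) • w := by
  funext i
  simp only [mulVec, dotProduct, vecMulVec_apply, Pi.smul_apply, smul_eq_mul,
    Finset.sum_mul]
  exact Finset.sum_congr rfl fun j _ => by ring

private lemma vecMulVec_transpose' {p : ℕ} (w : Fin p → ℝ) :
    (vecMulVec w w)ᵀ = vecMulVec w w := by
  ext i j
  simp [vecMulVec_apply, mul_comm]

private lemma vecMulVec_mul_self {p : ℕ} (w : Fin p → ℝ) :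
    vecMulVec w w * vecMulVec w w = (w ⬝ᵥ w) • vecMulVec w w := by
  ext i j
  simp only [mul_apply, vecMulVec_apply, Matrix.smul_apply, smul_eq_mul, dotProduct,
    Finset.sum_mul]
  exact Finset.sum_congr rfl fun k _ => by ring

/-- Householder: any two vectors of equal self-dot-product are related by an
orthogonal matrix. -/
private lemma house_aux {p : ℕ} (a b : Fin p → ℝ) (hab : a ⬝ᵥ a = b ⬝ᵥ b) :
    ∃ H : Matrix (Fin p) (Fin p) ℝ, H * Hᵀ = 1 ∧ H.mulVec a = b := by
  by_cases hweq : a = b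
  · exact ⟨1, by simp, by simp [hweq]⟩
  · set w : Fin p → ℝ := a - b with hw
    have hwne : w ≠ 0 := sub_ne_zero.mpr hweq
    have hww : 0 < w ⬝ᵥ w := dot_self_pos hwne
    set c : ℝ := 2 / (w ⬝ᵥ w) with hc
    set M : Matrix (Fin p) (Fin p) ℝ := vecMulVec w w with hM
    have hMM : M * M = (w ⬝ᵥ w) • M := vecMulVec_mul_self w
    refine ⟨1 - c • M, ?_, ?_⟩
    · have hT : (1 - c • M)ᵀ = 1 - c • M := by
        rw [transpose_sub, transpose_smul, hM, vecMulVec_transpose', transpose_one]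
      rw [hT]
      have h1 : (c • M) * (c • M) = c • M + c • M := by
        rw [smul_mul_smul_comm, hMM, smul_smul]
        have hcc : c * c * (w ⬝ᵥ w) = c + c := by
          rw [hc]
          field_simp
          ring
        rw [hcc, add_smul]
      rw [sub_mul, mul_sub, mul_sub, one_mul, mul_one, h1]
      simp only [one_mul]
      abel
    · have hba : b ⬝ᵥ a = a ⬝ᵥ b := by
        simp [dotProduct, mul_comm]
      have hwa : w ⬝ᵥ a = (w ⬝ᵥ w) / 2 := by
        simp only [hw, sub_dotProduct, dotProduct_sub]
        rw [hba, hab]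
        ring
      rw [sub_mulVec, one_mulVec, smul_mulVec, vecMulVec_mulVec', hwa]
      have : c • (((w ⬝ᵥ w) / 2) • w) = w := by
        rw [smul_smul, hc]
        have : 2 / (w ⬝ᵥ w) * ((w ⬝ᵥ w) / 2) = 1 := by
          field_simp
        rw [this, one_smul]
      rw [this, hw]
      abel

/-- Canonical form for DMPES distributions: if `Σ_k = σ_k² Σ₀` with `Σ₀` positive
definite and all pairwise differences of the centers `μ_k` lie on a common line, then a
single affine transformation `x ↦ A x + b` makes every component spherical
(`A Σ_k Aᵀ = σ_k² I`) and places every center on the all-ones vector (`A μ_k + b = δ_k U`). -/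
theorem stmt8 (p K : ℕ) (S0 : Matrix (Fin p) (Fin p) ℝ) (hS0 : S0.PosDef)
    (σ : Fin K → ℝ) (hσ : ∀ k, 0 < σ k)
    (μ : Fin K → (Fin p → ℝ)) (d : Fin p → ℝ)
    (hline : ∀ i j, ∃ t : ℝ, μ i - μ j = t • d) :
    ∃ A : Matrix (Fin p) (Fin p) ℝ, IsUnit A ∧ ∃ b : Fin p → ℝ, ∃ δ : Fin K → ℝ,
      ∀ k, A * ((σ k) ^ 2 • S0) * Aᵀ = (σ k) ^ 2 • (1 : Matrix (Fin p) (Fin p) ℝ) ∧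
        A.mulVec (μ k) + b = δ k • (fun _ => (1 : ℝ)) := by
  rcases Nat.eq_zero_or_pos K with hK | hK
  · subst hK
    exact ⟨1, isUnit_one, 0, Fin.elim0, fun k => k.elim0⟩
  -- square root of S0
  set R := CFC.sqrt S0 with hRdef
  have hRR : R * R = S0 := CFC.sqrt_mul_sqrt_self S0 hS0.posSemidef.nonneg
  have hRsym : Rᵀ = R := by
    have h := (CFC.sqrt_nonneg S0).posSemidef.isHermitian
    rwa [IsHermitian, conjTranspose_eq_transpose_of_trivial] at h
  have hRdet : IsUnit R.det := by
    have hdet : R.det * R.det = S0.det := by rw [← det_mul, hRR]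
    have h0 : S0.det ≠ 0 := ne_of_gt hS0.det_pos
    have : R.det ≠ 0 := fun h => h0 (by rw [← hdet, h, mul_zero])
    exact this.isUnit
  set A0 := R⁻¹ with hA0def
  have hA0unit : IsUnit A0 := isUnit_nonsing_inv_iff.mpr ((isUnit_iff_isUnit_det R).mpr hRdet)
  have hA0S : A0 * S0 * A0ᵀ = 1 := by
    rw [hA0def, transpose_nonsing_inv, hRsym, ← hRR, ← Matrix.mul_assoc,
      nonsing_inv_mul R hRdet, Matrix.one_mul, mul_nonsing_inv R hRdet]
  -- the line direction in transformed coordinates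
  set k₀ : Fin K := ⟨0, hK⟩
  set v : Fin p → ℝ := A0.mulVec d with hvdef
  set c : ℝ := Real.sqrt (v ⬝ᵥ v) / Real.sqrt p with hcdef
  set β : Fin p → ℝ := c • (fun _ => (1:ℝ)) with hβdef
  have hββ : v ⬝ᵥ v = β ⬝ᵥ β := by
    have hβval : β ⬝ᵥ β = (p : ℝ) * (c * c) := by
      simp [hβdef, dotProduct, Finset.sum_const, mul_comm]
    rcases Nat.eq_zero_or_pos p with hp | hp
    · subst hp
      rw [hβval]
      simp [dotProduct]
    · have hpp : (0:ℝ) < p := by exact_mod_cast hp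
      rw [hβval, hcdef]
      rw [div_mul_div_comm, Real.mul_self_sqrt (dot_self_nonneg v),
        Real.mul_self_sqrt hpp.le]
      field_simp
  obtain ⟨H, hH1, hHv⟩ := house_aux v β hββ
  have hHunit : IsUnit H := by
    have hdet : H.det * H.det = 1 := by
      have := congrArg Matrix.det hH1
      rwa [det_mul, det_transpose, det_one] at this
    exact (isUnit_iff_isUnit_det H).mpr (IsUnit.of_mul_eq_one _ hdet)
  refine ⟨H * A0, hHunit.mul hA0unit, -((H * A0).mulVec (μ k₀)),
    fun k => (hline k k₀).choose * c, fun k => ?_⟩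
  constructor
  · have key : (H * A0) * S0 * (H * A0)ᵀ = 1 := by
      rw [transpose_mul]
      calc H * A0 * S0 * (A0ᵀ * Hᵀ) = H * (A0 * S0 * A0ᵀ) * Hᵀ := by
            simp only [Matrix.mul_assoc]
        _ = 1 := by rw [hA0S, Matrix.mul_one, hH1]
    calc (H * A0) * ((σ k) ^ 2 • S0) * (H * A0)ᵀ
        = (σ k) ^ 2 • ((H * A0) * S0 * (H * A0)ᵀ) := by
          rw [Matrix.mul_smul, Matrix.smul_mul]
      _ = (σ k) ^ 2 • (1 : Matrix (Fin p) (Fin p) ℝ) := by rw [key]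
  · have ht := (hline k k₀).choose_spec
    have : (H * A0).mulVec (μ k) + -((H * A0).mulVec (μ k₀))
        = (H * A0).mulVec (μ k - μ k₀) := by
      rw [mulVec_sub]
      abel
    rw [this, ht, mulVec_smul, ← mulVec_mulVec, ← hvdef, hHv, hβdef, smul_smul]
end

section
/- Let D be a square-integrable random vector in ℝ^p whose covariance matrix equals a·(I + c·U Uᵀ) for scalars a and c, where U is the all-ones vector in ℝ^p. Let β be a unit vector in ℝ^p and set ρ = ⟨β, U⟩/√p. Then for every unit vector γ with ⟨γ, U⟩ = 0, Var(⟨β, D⟩) = ρ²·Var(⟨U, D⟩/√p) + (1 − ρ²)·Var(⟨γ, D⟩). -/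
open MeasureTheory ProbabilityTheory Matrix

section aux
variable {Ω : Type*} [MeasurableSpace Ω] (μ : Measure Ω) [IsProbabilityMeasure μ]

lemma var_dot {p : ℕ} (D : Ω → (Fin p → ℝ)) (hD2 : ∀ i, MemLp (fun ω => D ω i) 2 μ)
    (v : Fin p → ℝ) :
    variance (fun ω => v ⬝ᵥ D ω) μ
      = ∑ i, ∑ j, v i * v j *
          ∫ ω, (D ω i - ∫ ω', D ω' i ∂μ) * (D ω j - ∫ ω', D ω' j ∂μ) ∂μ := by
  set m : Fin p → ℝ := fun i => ∫ ω', D ω' i ∂μ with hm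
  have hint : ∀ i, Integrable (fun ω => D ω i) μ := fun i => (hD2 i).integrable one_le_two
  have hX2 : MemLp (fun ω => v ⬝ᵥ D ω) 2 μ := by
    have : (fun ω => v ⬝ᵥ D ω) = ∑ i : Fin p, fun ω => v i * D ω i := by
      ext ω; simp [dotProduct, Finset.sum_apply]
    rw [this]
    exact memLp_finset_sum' _ (fun i _ => ((hD2 i).const_mul (v i)))
  have hmean : (∫ ω, v ⬝ᵥ D ω ∂μ) = v ⬝ᵥ m := by
    simp only [dotProduct]
    rw [integral_finset_sum _ (fun i _ => (hint i).const_mul (v i))]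
    simp [hm, integral_const_mul]
  have hprod : ∀ i j : Fin p, Integrable (fun ω => (D ω i - m i) * (D ω j - m j)) μ := by
    intro i j
    have h1 : MemLp (fun ω => D ω i - m i) 2 μ := (hD2 i).sub (memLp_const _)
    have h2 : MemLp (fun ω => D ω j - m j) 2 μ := (hD2 j).sub (memLp_const _)
    have := (h2.smul h1 :
      MemLp ((fun ω => D ω i - m i) • (fun ω => D ω j - m j)) 1 μ)
    exact this.integrable le_rfl
  rw [variance_eq_integral hX2.1.aemeasurable, hmean]
  have hfun : ∀ ω, ((((fun ω => v ⬝ᵥ D ω) - fun _ => v ⬝ᵥ m) ^ (2:ℕ) : Ω → ℝ)) ω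
      = ∑ i, ∑ j, v i * v j * ((D ω i - m i) * (D ω j - m j)) := by
    intro ω
    have : (v ⬝ᵥ D ω - v ⬝ᵥ m) = ∑ i, v i * (D ω i - m i) := by
      simp [dotProduct, mul_sub, Finset.sum_sub_distrib]
    simp only [Pi.pow_apply, Pi.sub_apply, this, sq, Finset.sum_mul_sum]
    refine Finset.sum_congr rfl fun i _ => Finset.sum_congr rfl fun j _ => by ring
  calc (∫ ω, ((((fun ω => v ⬝ᵥ D ω) - fun _ => v ⬝ᵥ m) ^ (2:ℕ) : Ω → ℝ)) ω ∂μ)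
      = ∫ ω, ∑ i, ∑ j, v i * v j * ((D ω i - m i) * (D ω j - m j)) ∂μ := by
        exact integral_congr_ae (ae_of_all _ hfun)
    _ = ∑ i, ∑ j, v i * v j * ∫ ω, (D ω i - m i) * (D ω j - m j) ∂μ := by
        rw [integral_finset_sum _ (fun i _ => integrable_finset_sum _
          (fun j _ => ((hprod i j).const_mul _)))]
        refine Finset.sum_congr rfl fun i _ => ?_
        rw [integral_finset_sum _ (fun j _ => (hprod i j).const_mul _)]
        exact Finset.sum_congr rfl fun j _ => (integral_const_mul _ _)

end aux

lemma var_dot_closed {Ω : Type*} [MeasurableSpace Ω] (μ : Measure Ω) [IsProbabilityMeasure μ]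
    {p : ℕ} (D : Ω → (Fin p → ℝ)) (hD2 : ∀ i, MemLp (fun ω => D ω i) 2 μ) (a c : ℝ)
    (hcov : (Matrix.of fun i j =>
        ∫ ω, (D ω i - ∫ ω', D ω' i ∂μ) * (D ω j - ∫ ω', D ω' j ∂μ) ∂μ)
      = a • ((1 : Matrix (Fin p) (Fin p) ℝ) +
          c • Matrix.vecMulVec (fun _ => (1 : ℝ)) (fun _ => (1 : ℝ))))
    (v : Fin p → ℝ) :
    variance (fun ω => v ⬝ᵥ D ω) μ
      = a * (v ⬝ᵥ v) + a * c * (v ⬝ᵥ (fun _ => (1:ℝ)))^2 := by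
  have hentry : ∀ i j, (∫ ω, (D ω i - ∫ ω', D ω' i ∂μ) * (D ω j - ∫ ω', D ω' j ∂μ) ∂μ)
      = a * ((if i = j then (1:ℝ) else 0) + c) := by
    intro i j
    have := congrFun (congrFun hcov i) j
    simpa [Matrix.one_apply, Matrix.vecMulVec_apply, Matrix.smul_apply, Matrix.add_apply] using this
  rw [var_dot μ D hD2 v]
  have hrow : ∀ i, ∑ j, v i * v j * (a * ((if i = j then (1:ℝ) else 0) + c))
      = a * (v i * v i) + a * c * v i * (∑ j, v j) := by
    intro i
    have : ∀ j : Fin p, v i * v j * (a * ((if i = j then (1:ℝ) else 0) + c))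
        = (if i = j then a * (v i * v j) else 0) + a * c * (v i * v j) := by
      intro j; by_cases h : i = j <;> simp [h] <;> ring
    rw [Finset.sum_congr rfl (fun j _ => this j), Finset.sum_add_distrib,
      Finset.sum_ite_eq _ i (fun j => a * (v i * v j)), ← Finset.mul_sum, ← Finset.mul_sum]
    simp [mul_assoc]
  calc (∑ i, ∑ j, v i * v j *
          ∫ ω, (D ω i - ∫ ω', D ω' i ∂μ) * (D ω j - ∫ ω', D ω' j ∂μ) ∂μ)
      = ∑ i, (a * (v i * v i) + a * c * v i * (∑ j, v j)) := by
        refine Finset.sum_congr rfl fun i _ => ?_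
        rw [← hrow i]
        exact Finset.sum_congr rfl fun j _ => by rw [hentry i j]
    _ = a * (v ⬝ᵥ v) + a * c * (v ⬝ᵥ (fun _ => (1:ℝ)))^2 := by
        rw [Finset.sum_add_distrib, ← Finset.mul_sum]
        simp only [dotProduct, mul_one]
        rw [show (∑ i, a * c * v i * ∑ j, v j) = a * c * (∑ i, v i)^2 by
          rw [← Finset.sum_mul, ← Finset.mul_sum]; ring]

/-- Variance decomposition (Corollary 4.2): if the covariance matrix of `D` is
`a (I + c U Uᵀ)`, `β` is a unit vector with `ρ = ⟨β, U⟩/√p`, then for every unit vector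
`γ ⊥ U`, `Var(⟨β, D⟩) = ρ² Var(⟨U, D⟩/√p) + (1 - ρ²) Var(⟨γ, D⟩)`. -/
theorem stmt13 {Ω : Type*} [MeasurableSpace Ω] (μ : Measure Ω)
    [IsProbabilityMeasure μ] (p : ℕ) (D : Ω → (Fin p → ℝ))
    (hD2 : ∀ i, MemLp (fun ω => D ω i) 2 μ) (a c : ℝ)
    (hcov : (Matrix.of fun i j =>
        ∫ ω, (D ω i - ∫ ω', D ω' i ∂μ) * (D ω j - ∫ ω', D ω' j ∂μ) ∂μ)
      = a • ((1 : Matrix (Fin p) (Fin p) ℝ) +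
          c • Matrix.vecMulVec (fun _ => (1 : ℝ)) (fun _ => (1 : ℝ))))
    (β : Fin p → ℝ) (hβ : β ⬝ᵥ β = 1)
    (ρ : ℝ) (hρ : ρ = β ⬝ᵥ (fun _ => (1 : ℝ)) / Real.sqrt p) :
    ∀ γ : Fin p → ℝ, γ ⬝ᵥ γ = 1 → γ ⬝ᵥ (fun _ => (1 : ℝ)) = 0 →
      variance (fun ω => β ⬝ᵥ D ω) μ
        = ρ ^ 2 * variance (fun ω => ((fun _ => (1 : ℝ)) ⬝ᵥ D ω) / Real.sqrt p) μ
          + (1 - ρ ^ 2) * variance (fun ω => γ ⬝ᵥ D ω) μ := by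
  intro γ hγ hγU
  have hp : 0 < p := by
    by_contra h
    have : p = 0 := by omega
    subst this
    simp [dotProduct] at hβ
  have hpR : (0:ℝ) < p := by exact_mod_cast hp
  set U : Fin p → ℝ := fun _ => (1:ℝ) with hU
  have hUU : U ⬝ᵥ U = (p:ℝ) := by simp [dotProduct, hU]
  set s : ℝ := β ⬝ᵥ U with hs
  have hVβ := var_dot_closed μ D hD2 a c hcov β
  have hVγ := var_dot_closed μ D hD2 a c hcov γ
  have hVU := var_dot_closed μ D hD2 a c hcov U
  have hVZ : variance (fun ω => (U ⬝ᵥ D ω) / Real.sqrt p) μ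
      = ((Real.sqrt p)⁻¹)^2 * (a * (p:ℝ) + a * c * (p:ℝ)^2) := by
    have : (fun ω => (U ⬝ᵥ D ω) / Real.sqrt p)
        = fun ω => (Real.sqrt p)⁻¹ * (U ⬝ᵥ D ω) := by
      ext ω; rw [div_eq_inv_mul]
    rw [this, variance_const_mul, hVU, hUU]
  have hsq : ((Real.sqrt p)⁻¹)^2 = ((p:ℝ))⁻¹ := by
    rw [← Real.sqrt_inv, Real.sq_sqrt (by positivity)]
  have hρ2 : ρ^2 * (p:ℝ) = s^2 := by
    rw [hρ, div_pow, Real.sq_sqrt hpR.le, div_mul_cancel₀ _ hpR.ne']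
  rw [hVβ, hVγ, hVZ, hβ, hγ, hγU, hsq, ← hs]
  have hinv : ((p:ℝ))⁻¹ * (p:ℝ) = 1 := inv_mul_cancel₀ hpR.ne'
  linear_combination (-(a*c))*hρ2 - (ρ^2*a + ρ^2*a*c*(p:ℝ))*hinv
end

section
/- Let μ be a probability measure on ℝ^s × ℝ^r (with ℝ^r carrying the standard inner product) that is invariant under every map (x, y) ↦ (x, O y) where O is a linear isometry of ℝ^r with O(U_r) = U_r, U_r being the all-ones vector in ℝ^r. Then for any two unit vectors γ, γ' ∈ ℝ^r with ⟨γ, U_r⟩ = ⟨γ', U_r⟩ = 0, the pushforward of μ under (x, y) ↦ (x, ⟨γ, y⟩) equals the pushforward of μ under (x, y) ↦ (x, ⟨γ', y⟩). -/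
open MeasureTheory
open scoped RealInnerProductSpace

/-- Corollary 6.1: if a probability measure on ℝ^s × ℝ^r is invariant under every map
`(x, y) ↦ (x, O y)` with `O` a linear isometry of ℝ^r fixing the all-ones vector `U_r`,
then the pushforwards under `(x, y) ↦ (x, ⟨γ, y⟩)` and `(x, y) ↦ (x, ⟨γ', y⟩)` agree
for any two unit vectors `γ, γ'` orthogonal to `U_r`. -/
theorem stmt17 (s r : ℕ)
    (μ : Measure ((Fin s → ℝ) × EuclideanSpace ℝ (Fin r)))
    [IsProbabilityMeasure μ]
    (U : EuclideanSpace ℝ (Fin r)) (hU : ∀ j, U j = 1)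
    (hinv : ∀ O : EuclideanSpace ℝ (Fin r) ≃ₗᵢ[ℝ] EuclideanSpace ℝ (Fin r),
      O U = U → μ.map (fun xy => (xy.1, O xy.2)) = μ)
    (γ γ' : EuclideanSpace ℝ (Fin r)) (hγ : ‖γ‖ = 1) (hγ' : ‖γ'‖ = 1)
    (hγU : ⟪γ, U⟫ = 0) (hγ'U : ⟪γ', U⟫ = 0) :
    μ.map (fun xy => (xy.1, ⟪γ, xy.2⟫)) = μ.map (fun xy => (xy.1, ⟪γ', xy.2⟫)) := by
  set O : EuclideanSpace ℝ (Fin r) ≃ₗᵢ[ℝ] EuclideanSpace ℝ (Fin r) :=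
    Submodule.reflection (ℝ ∙ (γ' - γ))ᗮ with hO
  have hOγ' : O γ' = γ := Submodule.reflection_sub (hγ'.trans hγ.symm)
  have hOU : O U = U := by
    apply Submodule.reflection_mem_subspace_eq_self
    rw [Submodule.mem_orthogonal_singleton_iff_inner_right, inner_sub_left, hγ'U, hγU, sub_zero]
  have hμ : μ.map (fun xy => (xy.1, O xy.2)) = μ := hinv O hOU
  have hmg : Measurable fun xy : (Fin s → ℝ) × EuclideanSpace ℝ (Fin r) => (xy.1, O xy.2) :=
    measurable_fst.prodMk (O.continuous.measurable.comp measurable_snd)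
  have hmf : Measurable fun xy : (Fin s → ℝ) × EuclideanSpace ℝ (Fin r) =>
      (xy.1, ⟪γ, xy.2⟫) :=
    measurable_fst.prodMk ((continuous_const.inner continuous_id).measurable.comp measurable_snd)
  calc μ.map (fun xy => (xy.1, ⟪γ, xy.2⟫))
      = (μ.map (fun xy => (xy.1, O xy.2))).map (fun xy => (xy.1, ⟪γ, xy.2⟫)) := by rw [hμ]
    _ = μ.map (fun xy => (xy.1, ⟪γ, O xy.2⟫)) := by
        rw [Measure.map_map hmf hmg]; rfl
    _ = μ.map (fun xy => (xy.1, ⟪γ', xy.2⟫)) := by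
        congr 1
        funext xy
        congr 1
        rw [← hOγ', O.inner_map_map]
end
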